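/- Let Σ be a finite alphabet, n ∈ ℕ, and Ω_n = {σ₁,…,σₙ, ω₁,…,ωₙ} a set of 2n synchronization symbols disjoint from Σ. Let C₀(n) ⊆ Ω_n* be the [0]-counter semaphore language: the set of words v over Ω_n such that, for every i ≤ n, every prefix of v contains at least as many occurrences of σᵢ as of ωᵢ, and v contains equally many occurrences of σᵢ and ωᵢ. For any regular expression E over the alphabet Σ ∪ Ω_n, the language L_SCE(E) = { h(x) : x ∈ L(E) and h̄(x) ∈ C₀(n) } — where h erases all Ω_n-symbols from a word and h̄ erases all Σ-symbols — is a terminal Petri net language over Σ, i.e., there exist a labelled place/transition Petri net Π over Σ, an initial marking M₀, and a final marking M_f with T(Π, M₀, M_f) = L_SCE(E). -/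

import Mathlib

open Computability


/-- A labelled place/transition Petri net with places `P`, transitions `T`, and labels in
`A ∪ {λ}` (modelled by `Option A`, with `none` the silent label λ). -/
structure LabelledPetriNet (P T A : Type) where
  pre : T → P → ℕ
  post : T → P → ℕ
  label : T → Option A

namespace LabelledPetriNet

variable {P T A : Type}

/-- A transition `t` is enabled at marking `M` if every place holds enough marks. -/
def Enabled (N : LabelledPetriNet P T A) (M : P → ℕ) (t : T) : Prop :=
  ∀ p, N.pre t p ≤ M p

/-- Firing a transition `t` at marking `M`. -/
def fire (N : LabelledPetriNet P T A) (M : P → ℕ) (t : T) : P → ℕ :=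
  fun p => M p - N.pre t p + N.post t p

/-- `N.FiringSeq M s M'` : the sequence of transitions `s` can be successively fired from the
marking `M`, leading to the marking `M'`. -/
inductive FiringSeq (N : LabelledPetriNet P T A) : (P → ℕ) → List T → (P → ℕ) → Prop
  | nil (M : P → ℕ) : FiringSeq N M [] M
  | cons {M M' : P → ℕ} {t : T} {ts : List T} :
      N.Enabled M t → FiringSeq N (N.fire M t) ts M' → FiringSeq N M (t :: ts) M'

/-- The label word of a firing sequence: the labels of its transitions with the silent
labels deleted. -/
def labelWord (N : LabelledPetriNet P T A) (s : List T) : List A :=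
  s.filterMap N.label

/-- The Petri net language `L(Π, M₀)`: label words of all firing sequences from `M₀`. -/
def lang (N : LabelledPetriNet P T A) (M₀ : P → ℕ) : Language A :=
  { w | ∃ s M, N.FiringSeq M₀ s M ∧ N.labelWord s = w }

/-- The terminal Petri net language `T(Π, M₀, M_f)`: label words of all firing sequences
leading from `M₀` exactly to `M_f`. -/
def terminalLang (N : LabelledPetriNet P T A) (M₀ Mf : P → ℕ) : Language A :=
  { w | ∃ s, N.FiringSeq M₀ s Mf ∧ N.labelWord s = w }

end LabelledPetriNet

/-- The synchronization alphabet `Ω_n = {σ₁,…,σₙ, ω₁,…,ωₙ}`: the pair `(i, true)` is the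
increment symbol `σᵢ` and `(i, false)` is the decrement symbol `ωᵢ`. -/
abbrev Omega (n : ℕ) : Type := Fin n × Bool

/-- The `[0]`-counter semaphore language `C₀(n)`: words over `Ω_n` such that for every `i`,
every prefix contains at least as many `σᵢ`'s as `ωᵢ`'s, and the totals are equal. -/
def C0 (n : ℕ) : Language (Omega n) :=
  { v | ∀ i : Fin n,
      (∀ p, p <+: v → p.count (i, false) ≤ p.count (i, true)) ∧
      v.count (i, true) = v.count (i, false) }

/-- The homomorphism `h` erasing all `Ω_n`-symbols of a word over `Σ ∪ Ω_n`. -/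
def eraseOmega {A : Type} {n : ℕ} (x : List (A ⊕ Omega n)) : List A :=
  x.filterMap Sum.getLeft?

/-- The homomorphism `h̄` erasing all `Σ`-symbols of a word over `Σ ∪ Ω_n`. -/
def eraseSigma {A : Type} {n : ℕ} (x : List (A ⊕ Omega n)) : List (Omega n) :=
  x.filterMap Sum.getRight?


structure NA (α : Type) (Q : Type) where
  step : Q → Option α → Q → Prop
  start : Q
  accept : Q → Prop

instance {X : Type} [Finite X] : Finite (Option X) :=
  Finite.of_equiv (X ⊕ PUnit.{1}) (Equiv.optionEquivSumPUnit X).symm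

namespace NA

variable {α Q Q' : Type}

inductive Path (M : NA α Q) : Q → List α → Q → Prop
  | nil (q : Q) : Path M q [] q
  | cons {q q' q'' : Q} {a : α} {x : List α} :
      M.step q (some a) q' → Path M q' x q'' → Path M q (a :: x) q''
  | eps {q q' q'' : Q} {x : List α} :
      M.step q none q' → Path M q' x q'' → Path M q x q''

def accepts (M : NA α Q) : Language α := { x | ∃ q, M.Path M.start x q ∧ M.accept q }

theorem Path.trans {M : NA α Q} {q q' q'' : Q} {x y : List α}
    (h : M.Path q x q') (h' : M.Path q' y q'') : M.Path q (x ++ y) q'' := by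
  induction h with
  | nil => exact h'
  | cons e _ ih => exact .cons e (ih h')
  | eps e _ ih => exact .eps e (ih h')

/-- Mapping paths along a step-preserving function. -/
theorem Path.map {M : NA α Q} {M' : NA α Q'} (f : Q → Q')
    (hf : ∀ q o q', M.step q o q' → M'.step (f q) o (f q'))
    {q q' : Q} {x : List α} (h : M.Path q x q') : M'.Path (f q) x (f q') := by
  induction h with
  | nil => exact .nil _
  | cons e _ ih => exact .cons (hf _ _ _ e) ih
  | eps e _ ih => exact .eps (hf _ _ _ e) ih

theorem Path.no_step {M : NA α Q} (hM : ∀ q o q', ¬ M.step q o q')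
    {q q' : Q} {x : List α} (h : M.Path q x q') : x = [] ∧ q' = q := by
  induction h with
  | nil => exact ⟨rfl, rfl⟩
  | cons e _ _ => exact absurd e (hM _ _ _)
  | eps e _ _ => exact absurd e (hM _ _ _)

end NA

namespace RegularExpression

variable {α : Type}

/-- State space of the Thompson automaton. -/
def States : RegularExpression α → Type
  | zero => Unit
  | epsilon => Unit
  | char _ => Bool
  | plus E₁ E₂ => Option (States E₁ ⊕ States E₂)
  | comp E₁ E₂ => States E₁ ⊕ States E₂
  | star E => Option (States E)

instance States.finite : ∀ E : RegularExpression α, Finite (States E)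
  | zero => by unfold States; infer_instance
  | epsilon => by unfold States; infer_instance
  | char _ => by unfold States; infer_instance
  | plus E₁ E₂ => by have h₁ := States.finite E₁; have h₂ := States.finite E₂
                     unfold States; infer_instance
  | comp E₁ E₂ => by have h₁ := States.finite E₁; have h₂ := States.finite E₂
                     unfold States; infer_instance
  | star E => by have := States.finite E; unfold States; infer_instance

/-- Step relation of the plus-automaton. -/
inductive PlusStep {Q₁ Q₂ : Type} (M₁ : NA α Q₁) (M₂ : NA α Q₂) :
    Option (Q₁ ⊕ Q₂) → Option α → Option (Q₁ ⊕ Q₂) → Prop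
  | left {q o q'} : M₁.step q o q' → PlusStep M₁ M₂ (some (.inl q)) o (some (.inl q'))
  | right {q o q'} : M₂.step q o q' → PlusStep M₁ M₂ (some (.inr q)) o (some (.inr q'))
  | startL : PlusStep M₁ M₂ none none (some (.inl M₁.start))
  | startR : PlusStep M₁ M₂ none none (some (.inr M₂.start))

inductive CompStep {Q₁ Q₂ : Type} (M₁ : NA α Q₁) (M₂ : NA α Q₂) :
    Q₁ ⊕ Q₂ → Option α → Q₁ ⊕ Q₂ → Prop
  | left {q o q'} : M₁.step q o q' → CompStep M₁ M₂ (.inl q) o (.inl q')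
  | right {q o q'} : M₂.step q o q' → CompStep M₁ M₂ (.inr q) o (.inr q')
  | mid {q} : M₁.accept q → CompStep M₁ M₂ (.inl q) none (.inr M₂.start)

inductive StarStep {Q : Type} (M : NA α Q) : Option Q → Option α → Option Q → Prop
  | inner {q o q'} : M.step q o q' → StarStep M (some q) o (some q')
  | enter : StarStep M none none (some M.start)
  | exit {q} : M.accept q → StarStep M (some q) none none

variable {Q₁ Q₂ : Type} (M₁ : NA α Q₁) (M₂ : NA α Q₂)

def plusNA : NA α (Option (Q₁ ⊕ Q₂)) :=
  ⟨PlusStep M₁ M₂, none,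
    fun q => (∃ q₁, q = some (.inl q₁) ∧ M₁.accept q₁) ∨
             (∃ q₂, q = some (.inr q₂) ∧ M₂.accept q₂)⟩

def compNA : NA α (Q₁ ⊕ Q₂) :=
  ⟨CompStep M₁ M₂, .inl M₁.start, fun q => ∃ q₂, q = .inr q₂ ∧ M₂.accept q₂⟩

def starNA {Q : Type} (M : NA α Q) : NA α (Option Q) :=
  ⟨StarStep M, none, fun q => q = none⟩

/-- The Thompson automaton of a regular expression. -/
def toNA : (E : RegularExpression α) → NA α (States E)
  | zero => ⟨fun _ _ _ => False, (), fun _ => False⟩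
  | epsilon => ⟨fun _ _ _ => False, (), fun _ => True⟩
  | char a => ⟨fun q o q' => q = false ∧ o = some a ∧ q' = true, false, fun q => q = true⟩
  | plus E₁ E₂ => plusNA E₁.toNA E₂.toNA
  | comp E₁ E₂ => compNA E₁.toNA E₂.toNA
  | star E => starNA E.toNA

section Lemmas

variable {M₁ M₂} {Q : Type} {M : NA α Q}

theorem plus_path_inl {p : Option (Q₁ ⊕ Q₂)} {x r} (h : (plusNA M₁ M₂).Path p x r) :
    ∀ q, p = some (Sum.inl q) → ∃ q', r = some (Sum.inl q') ∧ M₁.Path q x q' := by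
  induction h with
  | nil q => rintro q rfl; exact ⟨q, rfl, .nil q⟩
  | cons e _ ih =>
      rintro q rfl
      cases e with
      | left e1 => obtain ⟨q', rfl, hp⟩ := ih _ rfl; exact ⟨q', rfl, .cons e1 hp⟩
  | eps e _ ih =>
      rintro q rfl
      cases e with
      | left e1 => obtain ⟨q', rfl, hp⟩ := ih _ rfl; exact ⟨q', rfl, .eps e1 hp⟩

theorem plus_path_inr {p : Option (Q₁ ⊕ Q₂)} {x r} (h : (plusNA M₁ M₂).Path p x r) :
    ∀ q, p = some (Sum.inr q) → ∃ q', r = some (Sum.inr q') ∧ M₂.Path q x q' := by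
  induction h with
  | nil q => rintro q rfl; exact ⟨q, rfl, .nil q⟩
  | cons e _ ih =>
      rintro q rfl
      cases e with
      | right e1 => obtain ⟨q', rfl, hp⟩ := ih _ rfl; exact ⟨q', rfl, .cons e1 hp⟩
  | eps e _ ih =>
      rintro q rfl
      cases e with
      | right e1 => obtain ⟨q', rfl, hp⟩ := ih _ rfl; exact ⟨q', rfl, .eps e1 hp⟩

theorem plusNA_accepts : (plusNA M₁ M₂).accepts = M₁.accepts + M₂.accepts := by
  ext x
  constructor
  · rintro ⟨r, hp, hacc⟩
    cases hp with
    | nil => rcases hacc with ⟨q₁, h, _⟩ | ⟨q₂, h, _⟩ <;> cases h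
    | cons e _ => cases e
    | eps e hp =>
        cases e with
        | startL =>
            obtain ⟨q', rfl, hp1⟩ := plus_path_inl hp _ rfl
            rcases hacc with ⟨q₁, h, ha⟩ | ⟨q₂, h, _⟩
            · obtain rfl : q₁ = q' := by simpa using h.symm
              exact Or.inl ⟨_, hp1, ha⟩
            · simp at h
        | startR =>
            obtain ⟨q', rfl, hp2⟩ := plus_path_inr hp _ rfl
            rcases hacc with ⟨q₁, h, _⟩ | ⟨q₂, h, ha⟩
            · simp at h
            · obtain rfl : q₂ = q' := by simpa using h.symm
              exact Or.inr ⟨_, hp2, ha⟩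
  · rintro (⟨q, hp, ha⟩ | ⟨q, hp, ha⟩)
    · exact ⟨some (.inl q), .eps .startL (hp.map (some ∘ Sum.inl) fun _ _ _ h => PlusStep.left h), Or.inl ⟨q, rfl, ha⟩⟩
    · exact ⟨some (.inr q), .eps .startR (hp.map (some ∘ Sum.inr) fun _ _ _ h => PlusStep.right h), Or.inr ⟨q, rfl, ha⟩⟩

theorem comp_path_inr {p : Q₁ ⊕ Q₂} {x r} (h : (compNA M₁ M₂).Path p x r) :
    ∀ q, p = Sum.inr q → ∃ q₂, r = Sum.inr q₂ ∧ M₂.Path q x q₂ := by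
  induction h with
  | nil q => rintro q rfl; exact ⟨q, rfl, .nil q⟩
  | cons e _ ih =>
      rintro q rfl
      cases e with
      | right e1 => obtain ⟨q', rfl, hp⟩ := ih _ rfl; exact ⟨q', rfl, .cons e1 hp⟩
  | eps e _ ih =>
      rintro q rfl
      cases e with
      | right e1 => obtain ⟨q', rfl, hp⟩ := ih _ rfl; exact ⟨q', rfl, .eps e1 hp⟩

theorem comp_path_inl {p : Q₁ ⊕ Q₂} {x r} (h : (compNA M₁ M₂).Path p x r) :
    ∀ q, p = Sum.inl q →
      (∃ q₁, r = Sum.inl q₁ ∧ M₁.Path q x q₁) ∨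
      (∃ y z q₁ q₂, x = y ++ z ∧ M₁.Path q y q₁ ∧ M₁.accept q₁ ∧
        M₂.Path M₂.start z q₂ ∧ r = Sum.inr q₂) := by
  induction h with
  | nil q => rintro q rfl; exact Or.inl ⟨q, rfl, .nil q⟩
  | cons e _ ih =>
      rintro q rfl
      cases e with
      | left e1 =>
          rcases ih _ rfl with ⟨q₁, rfl, hp⟩ | ⟨y, z, q₁, q₂, rfl, hy, ha, hz, rfl⟩
          · exact Or.inl ⟨q₁, rfl, .cons e1 hp⟩
          · exact Or.inr ⟨_ :: y, z, q₁, q₂, rfl, .cons e1 hy, ha, hz, rfl⟩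
  | eps e hp ih =>
      rintro q rfl
      cases e with
      | left e1 =>
          rcases ih _ rfl with ⟨q₁, rfl, hq⟩ | ⟨y, z, q₁, q₂, rfl, hy, ha, hz, rfl⟩
          · exact Or.inl ⟨q₁, rfl, .eps e1 hq⟩
          · exact Or.inr ⟨y, z, q₁, q₂, rfl, .eps e1 hy, ha, hz, rfl⟩
      | mid ha =>
          obtain ⟨q₂, rfl, hp2⟩ := comp_path_inr hp _ rfl
          exact Or.inr ⟨[], _, q, q₂, rfl, .nil q, ha, hp2, rfl⟩

theorem compNA_accepts : (compNA M₁ M₂).accepts = M₁.accepts * M₂.accepts := by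
  ext x
  constructor
  · rintro ⟨r, hp, q₂, rfl, ha2⟩
    rcases comp_path_inl hp _ rfl with ⟨q₁, h, _⟩ | ⟨y, z, q₁, q₂', rfl, hy, ha, hz, hr⟩
    · cases h
    · obtain rfl : q₂' = q₂ := by simpa using hr.symm
      exact Language.mem_mul.2 ⟨y, ⟨q₁, hy, ha⟩, z, ⟨_, hz, ha2⟩, rfl⟩
  · intro hx
    obtain ⟨y, ⟨q₁, hy, ha1⟩, z, ⟨q₂, hz, ha2⟩, rfl⟩ := Language.mem_mul.1 hx
    refine ⟨.inr q₂, (hy.map Sum.inl fun _ _ _ h => CompStep.left h).trans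
      (.eps (.mid ha1) (hz.map Sum.inr fun _ _ _ h => CompStep.right h)), q₂, rfl, ha2⟩

theorem star_path {p : Option Q} {x r} (h : (starNA M).Path p x r) (hr : r = none) :
    (p = none → x ∈ M.accepts∗) ∧
    (∀ q, p = some q →
      ∃ y z q', x = y ++ z ∧ M.Path q y q' ∧ M.accept q' ∧ z ∈ M.accepts∗) := by
  induction h with
  | nil q =>
      subst hr
      refine ⟨fun _ => Language.nil_mem_kstar _, ?_⟩
      rintro q h; cases h
  | cons e _ ih =>
      constructor
      · rintro rfl; cases e
      · rintro q rfl
        cases e with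
        | inner e1 =>
            obtain ⟨y, z, q', rfl, hy, ha, hz⟩ := (ih hr).2 _ rfl
            exact ⟨_ :: y, z, q', rfl, .cons e1 hy, ha, hz⟩
  | eps e hp ih =>
      constructor
      · rintro rfl
        cases e with
        | enter =>
            obtain ⟨y, z, q', rfl, hy, ha, hz⟩ := (ih hr).2 _ rfl
            obtain ⟨L, rfl, hL⟩ := Language.mem_kstar.1 hz
            refine Language.mem_kstar.2 ⟨y :: L, rfl, ?_⟩
            intro w hw
            rcases List.mem_cons.1 hw with rfl | hw'
            exacts [⟨q', hy, ha⟩, hL _ hw']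
      · rintro q rfl
        cases e with
        | inner e1 =>
            obtain ⟨y, z, q', rfl, hy, ha, hz⟩ := (ih hr).2 _ rfl
            exact ⟨y, z, q', rfl, .eps e1 hy, ha, hz⟩
        | exit ha => exact ⟨[], _, q, rfl, .nil q, ha, (ih hr).1 rfl⟩

theorem starNA_accepts : (starNA M).accepts = M.accepts∗ := by
  ext x
  constructor
  · rintro ⟨r, hp, rfl⟩
    exact (star_path hp rfl).1 rfl
  · intro hx
    obtain ⟨L, rfl, hL⟩ := Language.mem_kstar.1 hx
    clear hx
    induction L with
    | nil => exact ⟨none, .nil none, rfl⟩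
    | cons y L ihL =>
        obtain ⟨q, hy, ha⟩ := hL y (by simp)
        obtain ⟨r, hp, hr⟩ := ihL fun w hw => hL w (by simp [hw])
        refine ⟨r, ?_, hr⟩
        have h1 : (starNA M).Path (some M.start) y (some q) :=
          hy.map some fun _ _ _ h => StarStep.inner h
        exact .eps .enter (h1.trans (.eps (.exit ha) hp))

end Lemmas

theorem accepts_toNA : ∀ E : RegularExpression α, E.toNA.accepts = E.matches'
  | zero => by
      ext x
      constructor
      · rintro ⟨q, _, h⟩; exact h.elim
      · intro h
        exact (Language.notMem_zero x
          (by rwa [show (zero : RegularExpression α).matches' = 0 from rfl] at h)).elim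
  | epsilon => by
      ext x
      rw [show epsilon.matches' = (1 : Language α) from rfl]
      rw [Language.mem_one]
      constructor
      · rintro ⟨q, hp, _⟩
        exact (hp.no_step (by exact fun _ _ _ h => h)).1
      · rintro rfl; exact ⟨(), .nil (), trivial⟩
  | char a => by
      ext x
      simp only [matches'_char, Set.mem_singleton_iff]
      constructor
      · rintro ⟨q, hp, hacc⟩
        cases hp with
        | nil => cases hacc
        | cons e hp' =>
            obtain ⟨-, he, rfl⟩ := e
            cases hp' with
            | nil => cases he; rfl
            | cons e2 _ => exact absurd e2.1 (by simp)
            | eps e2 _ => exact absurd e2.1 (by simp)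
        | eps e _ => exact absurd e.2.1 (by simp)
      · rintro rfl
        exact ⟨true, .cons ⟨rfl, rfl, rfl⟩ (.nil true), rfl⟩
  | plus E₁ E₂ => by
      rw [show (E₁.plus E₂).matches' = E₁.matches' + E₂.matches' from rfl,
        ← accepts_toNA E₁, ← accepts_toNA E₂]
      exact plusNA_accepts
  | comp E₁ E₂ => by
      rw [show (E₁.comp E₂).matches' = E₁.matches' * E₂.matches' from rfl,
        ← accepts_toNA E₁, ← accepts_toNA E₂]
      exact compNA_accepts
  | star E => by
      rw [show E.star.matches' = E.matches'∗ from rfl, ← accepts_toNA E]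
      exact starNA_accepts

end RegularExpression

section Petri

open scoped Classical

variable {A : Type} {n : ℕ} {Q : Type}

/-- Counter tokens consumed by firing an edge with letter `o`. -/
def preCnt (o : Option (A ⊕ Omega n)) (j : Fin n) : ℕ :=
  match o with
  | some (.inr (i, false)) => if j = i then 1 else 0
  | _ => 0

/-- Counter tokens produced by firing an edge with letter `o`. -/
def postCnt (o : Option (A ⊕ Omega n)) (j : Fin n) : ℕ :=
  match o with
  | some (.inr (i, true)) => if j = i then 1 else 0
  | _ => 0

/-- Transitions of the Petri net: automaton edges plus a finishing transition for each
accepting state. -/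
def PNTrans (M : NA (A ⊕ Omega n) Q) : Type :=
  {e : Q × Option (A ⊕ Omega n) × Q // M.step e.1 e.2.1 e.2.2} ⊕ {q : Q // M.accept q}

/-- The Petri net of a controlled automaton: one place per automaton state, a `done` place
(`Sum.inl none`), and one counter place per semaphore. -/
noncomputable def toNet (M : NA (A ⊕ Omega n) Q) :
    LabelledPetriNet (Option Q ⊕ Fin n) (PNTrans M) A where
  pre t p :=
    match t, p with
    | .inl ⟨(q, _, _), _⟩, .inl x => if x = some q then 1 else 0
    | .inl ⟨(_, o, _), _⟩, .inr j => preCnt o j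
    | .inr ⟨q, _⟩, .inl x => if x = some q then 1 else 0
    | .inr _, .inr _ => 0
  post t p :=
    match t, p with
    | .inl ⟨(_, _, q'), _⟩, .inl x => if x = some q' then 1 else 0
    | .inl ⟨(_, o, _), _⟩, .inr j => postCnt o j
    | .inr _, .inl x => if x = none then 1 else 0
    | .inr _, .inr _ => 0
  label t :=
    match t with
    | .inl ⟨(_, some (.inl a), _), _⟩ => some a
    | _ => none

/-- The marking with one token on the place `s` and counter values `c`. -/
noncomputable def mark (s : Option Q) (c : Fin n → ℕ) : Option Q ⊕ Fin n → ℕ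
  | .inl x => if x = s then 1 else 0
  | .inr i => c i

variable {M : NA (A ⊕ Omega n) Q}

@[simp] theorem mark_inl (s : Option Q) (c : Fin n → ℕ) (x : Option Q) :
    mark s c (.inl x) = if x = s then 1 else 0 := rfl

@[simp] theorem mark_inr (s : Option Q) (c : Fin n → ℕ) (i : Fin n) :
    mark s c (.inr i) = c i := rfl

@[simp] theorem label_edge (q q' : Q) (o) (h : M.step q o q') :
    (toNet M).label (.inl ⟨(q, o, q'), h⟩) =
      (match o with | some (.inl a) => some a | _ => none) := by
  rcases o with _ | (a | w) <;> rfl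

@[simp] theorem label_fin (q : Q) (h : M.accept q) :
    (toNet M).label (.inr ⟨q, h⟩) = none := rfl

/-- The prefix condition relative to initial counter values `c`. -/
def OKc {n : ℕ} (c : Fin n → ℕ) (v : List (Omega n)) : Prop :=
  ∀ (i : Fin n) p, p <+: v → p.count (i, false) ≤ c i + p.count (i, true)

theorem fire_edge {q o q'} (h : M.step q o q') (c : Fin n → ℕ) :
    (toNet M).fire (mark (some q) c) (.inl ⟨(q, o, q'), h⟩) =
      mark (some q') (fun j => c j - preCnt o j + postCnt o j) := by
  funext p
  rcases p with x | j
  · show (if x = some q then 1 else 0) - (if x = some q then 1 else 0) +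
      (if x = some q' then 1 else 0) = _
    simp
  · rfl

theorem enabled_edge {q o q'} (h : M.step q o q') (c : Fin n → ℕ)
    (hc : ∀ j, preCnt o j ≤ c j) :
    (toNet M).Enabled (mark (some q) c) (.inl ⟨(q, o, q'), h⟩) := by
  intro p
  rcases p with x | j
  · exact le_of_eq rfl
  · exact hc j

theorem fire_fin {q} (h : M.accept q) (c : Fin n → ℕ) :
    (toNet M).fire (mark (some q) c) (.inr ⟨q, h⟩) = mark none c := by
  funext p
  rcases p with x | j
  · show (if x = some q then 1 else 0) - (if x = some q then 1 else 0) +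
      (if x = none then 1 else 0) = _
    simp
  · rfl

theorem enabled_fin {q} (h : M.accept q) (c : Fin n → ℕ) :
    (toNet M).Enabled (mark (some q) c) (.inr ⟨q, h⟩) := by
  intro p
  rcases p with x | j
  · exact le_of_eq rfl
  · exact Nat.zero_le _

theorem enabled_edge_src {q₀ o q₁ h} {s : Option Q} {c : Fin n → ℕ}
    (he : (toNet M).Enabled (mark s c) (.inl ⟨(q₀, o, q₁), h⟩)) :
    s = some q₀ ∧ ∀ j, preCnt o j ≤ c j := by
  refine ⟨?_, fun j => he (.inr j)⟩
  have h1 : (if (some q₀ : Option Q) = some q₀ then 1 else 0) ≤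
      (if (some q₀ : Option Q) = s then 1 else 0) := he (.inl (some q₀))
  by_contra hne
  rw [if_pos rfl, if_neg (fun hh => hne hh.symm)] at h1
  omega

theorem enabled_fin_src {q₀ h} {s : Option Q} {c : Fin n → ℕ}
    (he : (toNet M).Enabled (mark s c) (.inr ⟨q₀, h⟩)) : s = some q₀ := by
  have h1 : (if (some q₀ : Option Q) = some q₀ then 1 else 0) ≤
      (if (some q₀ : Option Q) = s then 1 else 0) := he (.inl (some q₀))
  by_contra hne
  rw [if_pos rfl, if_neg (fun hh => hne hh.symm)] at h1
  omega

theorem none_stuck {c : Fin n → ℕ} {s M'}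
    (h : (toNet M).FiringSeq (mark none c) s M') : s = [] ∧ M' = mark none c := by
  cases h with
  | nil => exact ⟨rfl, rfl⟩
  | @cons _ _ t ts he _ =>
      exfalso
      rcases t with ⟨⟨q₀, o, q₁⟩, ht⟩ | ⟨q₀, ht⟩
      · exact Option.some_ne_none _ (enabled_edge_src he).1.symm
      · exact Option.some_ne_none _ (enabled_fin_src he).symm

theorem FiringSeq.nil_eq {P T A : Type} {N : LabelledPetriNet P T A} {M₀ Mf : P → ℕ}
    (h : N.FiringSeq M₀ [] Mf) : M₀ = Mf := by cases h; rfl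

theorem FiringSeq.append {P T A : Type} {N : LabelledPetriNet P T A} {M₀ M₁ M₂ : P → ℕ}
    {s s' : List T} (h : N.FiringSeq M₀ s M₁) (h' : N.FiringSeq M₁ s' M₂) :
    N.FiringSeq M₀ (s ++ s') M₂ := by
  induction h with
  | nil => exact h'
  | cons he _ ih => exact .cons he (ih h')

@[simp] theorem eraseOmega_cons_inl (a : A) (x : List (A ⊕ Omega n)) :
    eraseOmega (.inl a :: x) = a :: eraseOmega x := rfl

@[simp] theorem eraseOmega_cons_inr (w : Omega n) (x : List (A ⊕ Omega n)) :
    eraseOmega (.inr w :: x) = eraseOmega x := rfl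

@[simp] theorem eraseSigma_cons_inl (a : A) (x : List (A ⊕ Omega n)) :
    eraseSigma (.inl a :: x) = eraseSigma x := rfl

@[simp] theorem eraseSigma_cons_inr (w : Omega n) (x : List (A ⊕ Omega n)) :
    eraseSigma (.inr w :: x) = w :: eraseSigma x := rfl

theorem okc_tail {c : Fin n → ℕ} {u : Omega n} {v : List (Omega n)}
    (h : OKc c (u :: v)) :
    OKc (fun j => c j - preCnt (A := A) (some (.inr u)) j +
      postCnt (A := A) (some (.inr u)) j) v := by
  rcases u with ⟨i, b⟩
  intro j p hp
  have h1 := h j ((i, b) :: p) (List.cons_prefix_cons.2 ⟨rfl, hp⟩)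
  cases b
  · have h2 := h i [(i, false)] (List.cons_prefix_cons.2 ⟨rfl, List.nil_prefix⟩)
    simp only [List.count_cons, List.count_nil] at h1 h2
    show p.count (j, false) ≤ c j - (if j = i then 1 else 0) + 0 + p.count (j, true)
    by_cases hji : j = i
    · subst hji; simp at h1 h2 ⊢; omega
    · have hij : i ≠ j := fun hh => hji hh.symm
      simp [hji, hij] at h1 ⊢; omega
  · simp only [List.count_cons, List.count_nil] at h1
    show p.count (j, false) ≤ c j - 0 + (if j = i then 1 else 0) + p.count (j, true)
    by_cases hji : j = i
    · subst hji; simp at h1 ⊢; omega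
    · have hij : i ≠ j := fun hh => hji hh.symm
      simp [hji, hij] at h1 ⊢; omega


@[simp] theorem preCnt_inl (a : A) (j : Fin n) : preCnt (n := n) (some (.inl a)) j = 0 := rfl
@[simp] theorem preCnt_none (j : Fin n) : preCnt (A := A) (n := n) none j = 0 := rfl
@[simp] theorem preCnt_tt (i j : Fin n) :
    preCnt (A := A) (some (.inr (i, true))) j = 0 := rfl
@[simp] theorem preCnt_ff (i j : Fin n) :
    preCnt (A := A) (some (.inr (i, false))) j = if j = i then 1 else 0 := rfl
@[simp] theorem postCnt_inl (a : A) (j : Fin n) : postCnt (n := n) (some (.inl a)) j = 0 := rfl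
@[simp] theorem postCnt_none (j : Fin n) : postCnt (A := A) (n := n) none j = 0 := rfl
@[simp] theorem postCnt_tt (i j : Fin n) :
    postCnt (A := A) (some (.inr (i, true))) j = if j = i then 1 else 0 := rfl
@[simp] theorem postCnt_ff (i j : Fin n) :
    postCnt (A := A) (some (.inr (i, false))) j = 0 := rfl

theorem tot_tail {c c' : Fin n → ℕ} {u : Omega n} {v : List (Omega n)}
    (hc : ∀ j, preCnt (A := A) (some (.inr u)) j ≤ c j)
    (htot : ∀ j, c' j + v.count (j, false) =
      (c j - preCnt (A := A) (some (.inr u)) j + postCnt (A := A) (some (.inr u)) j) +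
        v.count (j, true)) :
    ∀ j, c' j + ((u :: v).count (j, false)) = c j + ((u :: v).count (j, true)) := by
  rcases u with ⟨i, b⟩
  intro j
  have h1 := htot j
  have h2 := hc j
  cases b <;> by_cases hji : j = i
  · subst hji; simp [List.count_cons] at h1 h2 ⊢; omega
  · have hij : i ≠ j := fun hh => hji hh.symm
    simp [List.count_cons, hji, hij] at h1 h2 ⊢; omega
  · subst hji; simp [List.count_cons] at h1 h2 ⊢; omega
  · have hij : i ≠ j := fun hh => hji hh.symm
    simp [List.count_cons, hji, hij] at h1 h2 ⊢; omega

theorem path_to_firing {q x q'} (hp : M.Path q x q') :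
    ∀ c : Fin n → ℕ, OKc c (eraseSigma x) →
    ∃ (s : List (PNTrans M)) (c' : Fin n → ℕ),
      (toNet M).FiringSeq (mark (some q) c) s (mark (some q') c') ∧
      (toNet M).labelWord s = eraseOmega x ∧
      ∀ j, c' j + (eraseSigma x).count (j, false) = c j + (eraseSigma x).count (j, true) := by
  induction hp with
  | nil q => exact fun c _ => ⟨[], c, .nil _, rfl, fun _ => rfl⟩
  | @cons q q₁ q'' a x e _ ih =>
      intro c hok
      have hc : ∀ j, preCnt (A := A) (some a) j ≤ c j := by
        intro j
        rcases a with a | ⟨i, b⟩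
        · exact Nat.zero_le _
        · cases b
          · rw [preCnt_ff]
            by_cases hji : j = i
            · subst hji
              have h2 := hok j [(j, false)]
                (List.cons_prefix_cons.2 ⟨rfl, List.nil_prefix⟩)
              simp [List.count_cons] at h2
              simp [h2]
            · simp [hji]
          · exact Nat.zero_le _
      have hok₁ : OKc (fun j => c j - preCnt (A := A) (some a) j +
          postCnt (A := A) (some a) j) (eraseSigma x) := by
        rcases a with a | w
        · have hcc : (fun j => c j - preCnt (A := A) (some (Sum.inl a)) j +
              postCnt (A := A) (some (Sum.inl a)) j) = c := by
            funext j; simp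
          rw [hcc]
          exact hok
        · exact okc_tail hok
      obtain ⟨s, c', hseq, hlw, htot⟩ := ih _ hok₁
      refine ⟨.inl ⟨(q, some a, q₁), e⟩ :: s, c',
        .cons (enabled_edge e c hc) (by rw [fire_edge e c]; exact hseq), ?_, ?_⟩
      · show List.filterMap _ (_ :: s) = _
        erw [List.filterMap_cons]
        rcases a with a | w
        · rw [show (toNet M).label (.inl ⟨(q, some (Sum.inl a), q₁), e⟩) = some a from rfl]
          rw [eraseOmega_cons_inl]
          exact congrArg _ hlw
        · rw [show (toNet M).label (.inl ⟨(q, some (Sum.inr w), q₁), e⟩) = none from rfl]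
          rw [eraseOmega_cons_inr]
          exact hlw
      · rcases a with a | w
        · intro j
          have h1 := htot j
          simp only [eraseSigma_cons_inl]
          simp at h1
          omega
        · simp only [eraseSigma_cons_inr]
          exact tot_tail hc htot
  | @eps q q₁ q'' x e _ ih =>
      intro c hok
      obtain ⟨s, c', hseq, hlw, htot⟩ := ih c hok
      have hcc : (fun j => c j - preCnt (A := A) (n := n) none j +
          postCnt (A := A) (n := n) none j) = c := by funext j; simp
      refine ⟨.inl ⟨(q, none, q₁), e⟩ :: s, c',
        .cons (enabled_edge e c fun j => Nat.zero_le _)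
          (by rw [fire_edge e c, hcc]; exact hseq), ?_, htot⟩
      show List.filterMap _ (_ :: s) = _
      erw [List.filterMap_cons,
        show (toNet M).label (.inl ⟨(q, none, q₁), e⟩) = none from rfl]
      exact hlw

theorem okc_untail {c : Fin n → ℕ} {u : Omega n} {v : List (Omega n)}
    (hc : ∀ j, preCnt (A := A) (some (.inr u)) j ≤ c j)
    (h : OKc (fun j => c j - preCnt (A := A) (some (.inr u)) j +
      postCnt (A := A) (some (.inr u)) j) v) :
    OKc c (u :: v) := by
  rcases u with ⟨i, b⟩
  intro j p hp
  rcases p with _ | ⟨w, p'⟩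
  · simp
  · obtain ⟨rfl, hp'⟩ := List.cons_prefix_cons.1 hp
    have h1 := h j p' hp'
    have h2 := hc j
    simp only at h1
    cases b <;> by_cases hji : j = i
    · subst hji; simp [List.count_cons] at h1 h2 ⊢; omega
    · have hij : i ≠ j := fun hh => hji hh.symm
      simp [List.count_cons, hji, hij] at h1 h2 ⊢; omega
    · subst hji; simp [List.count_cons] at h1 h2 ⊢; omega
    · have hij : i ≠ j := fun hh => hji hh.symm
      simp [List.count_cons, hji, hij] at h1 h2 ⊢; omega

theorem tot_untail {c : Fin n → ℕ} {u : Omega n} {v : List (Omega n)}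
    (hc : ∀ j, preCnt (A := A) (some (.inr u)) j ≤ c j)
    (htot : ∀ j, (c j - preCnt (A := A) (some (.inr u)) j +
      postCnt (A := A) (some (.inr u)) j) + v.count (j, true) = v.count (j, false)) :
    ∀ j, c j + ((u :: v).count (j, true)) = (u :: v).count (j, false) := by
  rcases u with ⟨i, b⟩
  intro j
  have h1 := htot j
  have h2 := hc j
  cases b <;> by_cases hji : j = i
  · subst hji; simp [List.count_cons] at h1 h2 ⊢; omega
  · have hij : i ≠ j := fun hh => hji hh.symm
    simp [List.count_cons, hji, hij] at h1 h2 ⊢; omega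
  · subst hji; simp [List.count_cons] at h1 h2 ⊢; omega
  · have hij : i ≠ j := fun hh => hji hh.symm
    simp [List.count_cons, hji, hij] at h1 h2 ⊢; omega

theorem firing_to_path : ∀ {s : List (PNTrans M)} {c : Fin n → ℕ} {q : Q},
    (toNet M).FiringSeq (mark (some q) c) s (mark none (fun _ => 0)) →
    ∃ (x : List (A ⊕ Omega n)) (q' : Q), M.Path q x q' ∧ M.accept q' ∧
      (toNet M).labelWord s = eraseOmega x ∧
      OKc c (eraseSigma x) ∧
      ∀ j, c j + (eraseSigma x).count (j, true) = (eraseSigma x).count (j, false) := by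
  intro s
  induction s with
  | nil =>
      intro c q h
      exfalso
      have := congrFun (FiringSeq.nil_eq h) (.inl (some q))
      simp at this
  | cons t ts ih =>
      intro c q h
      cases h with
      | cons he hrest =>
          rcases t with ⟨⟨q₀, o, q₁⟩, ht⟩ | ⟨q₀, ht⟩
          · obtain ⟨hq, hcpre⟩ := enabled_edge_src he
            obtain rfl : q₀ = q := Option.some_injective _ hq.symm
            rw [fire_edge ht c] at hrest
            rcases o with _ | (a | w)
            · have hcc : (fun j => c j - preCnt (A := A) (n := n) none j +
                  postCnt (A := A) (n := n) none j) = c := by funext j; simp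
              rw [hcc] at hrest
              obtain ⟨x, q', hpath, hacc, hlw, hok, htot⟩ := ih hrest
              refine ⟨x, q', .eps ht hpath, hacc, ?_, hok, htot⟩
              show List.filterMap _ (_ :: ts) = _
              erw [List.filterMap_cons,
                show (toNet M).label (.inl ⟨(q₀, none, q₁), ht⟩) = none from rfl]
              exact hlw
            · have hcc : (fun j => c j - preCnt (A := A) (some (Sum.inl a)) j +
                  postCnt (A := A) (some (Sum.inl a)) j) = c := by funext j; simp
              rw [hcc] at hrest
              obtain ⟨x, q', hpath, hacc, hlw, hok, htot⟩ := ih hrest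
              refine ⟨Sum.inl a :: x, q', .cons ht hpath, hacc, ?_, ?_, ?_⟩
              · show List.filterMap _ (_ :: ts) = _
                erw [List.filterMap_cons,
                  show (toNet M).label (.inl ⟨(q₀, some (Sum.inl a), q₁), ht⟩) = some a from rfl,
                  eraseOmega_cons_inl]
                exact congrArg _ hlw
              · rw [eraseSigma_cons_inl]; exact hok
              · rw [eraseSigma_cons_inl]; exact htot
            · obtain ⟨x, q', hpath, hacc, hlw, hok, htot⟩ := ih hrest
              refine ⟨Sum.inr w :: x, q', .cons ht hpath, hacc, ?_, ?_, ?_⟩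
              · show List.filterMap _ (_ :: ts) = _
                erw [List.filterMap_cons,
                  show (toNet M).label (.inl ⟨(q₀, some (Sum.inr w), q₁), ht⟩) = none from rfl,
                  eraseOmega_cons_inr]
                exact hlw
              · rw [eraseSigma_cons_inr]
                exact okc_untail hcpre hok
              · rw [eraseSigma_cons_inr]
                exact tot_untail hcpre htot
          · have hq := enabled_fin_src he
            obtain rfl : q₀ = q := Option.some_injective _ hq.symm
            rw [fire_fin ht c] at hrest
            obtain ⟨rfl, hM⟩ := none_stuck hrest
            have hc0 : ∀ j, c j = 0 := by
              intro j
              have := congrFun hM (.inr j)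
              simpa using this.symm
            refine ⟨[], q₀, .nil q₀, ht, rfl, ?_, ?_⟩
            · intro i p hp
              rw [List.prefix_nil.1 hp]
              simp
            · intro j; simp [eraseSigma, hc0 j]

end Petri

instance pntrans_finite {A : Type} {n : ℕ} {Q : Type} [Finite A] [Finite Q]
    (M : NA (A ⊕ Omega n) Q) : Finite (PNTrans M) := by
  unfold PNTrans; infer_instance


/-- The language of every regular expression controlled by balanced ([0]-counter) semaphores
is a terminal Petri net language. -/
theorem recbs_lang_is_terminal_petri_lang {A : Type} [Fintype A] (n : ℕ)
    (E : RegularExpression (A ⊕ Omega n)) :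
    ∃ (P T : Type) (_ : Fintype P) (_ : Fintype T) (N : LabelledPetriNet P T A)
      (M₀ Mf : P → ℕ),
      N.terminalLang M₀ Mf =
        { w | ∃ x ∈ E.matches', eraseOmega x = w ∧ eraseSigma x ∈ C0 n } := by
  classical
  have hfin : Finite (RegularExpression.States E) := RegularExpression.States.finite E
  set M := E.toNA with hM
  refine ⟨Option (RegularExpression.States E) ⊕ Fin n, PNTrans M,
    Fintype.ofFinite _, Fintype.ofFinite _, toNet M,
    mark (some M.start) (fun _ => 0), mark none (fun _ => 0), ?_⟩
  ext w
  simp only [LabelledPetriNet.terminalLang, Set.mem_setOf_eq]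
  constructor
  · rintro ⟨s, hseq, hlw⟩
    obtain ⟨x, q', hpath, hacc, hlw', hok, htot⟩ := firing_to_path hseq
    refine ⟨x, ?_, by rw [← hlw, hlw'], ?_⟩
    · rw [← RegularExpression.accepts_toNA]
      exact ⟨q', hpath, hacc⟩
    · refine fun i => ⟨?_, ?_⟩
      · intro p hp
        simpa using hok i p hp
      · simpa using htot i
  · rintro ⟨x, hx, rfl, hC0⟩
    rw [← RegularExpression.accepts_toNA] at hx
    obtain ⟨q', hpath, haccq⟩ := hx
    have hok : OKc (fun _ => 0) (eraseSigma x) := by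
      intro i p hp
      simpa using (hC0 i).1 p hp
    obtain ⟨s, c', hseq, hlw, htot⟩ := path_to_firing hpath _ hok
    have hc' : c' = fun _ => 0 := by
      funext j
      have h1 := htot j
      have h2 := (hC0 j).2
      simp at h1
      omega
    rw [hc'] at hseq
    refine ⟨s ++ [.inr ⟨q', haccq⟩],
      FiringSeq.append hseq (.cons (enabled_fin haccq _)
        (by rw [fire_fin haccq]; exact .nil _)), ?_⟩
    show List.filterMap _ (s ++ _) = _
    rw [List.filterMap_append]
    simp [LabelledPetriNet.labelWord] at hlw ⊢
    rw [← List.append_nil (eraseOmega x), ← hlw]; rfl
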